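/- Let 1 ≤ k₋ < k₊ and n ≥ 1 be integers, let P = k₊# be the product of all primes p ≤ k₊, and let r be an integer with 1 < r < k₊+k₋. If there exists an integer u with gcd(u,P) = 1 such that (k₊+k₋)n+1 ≡ r·u (mod r·P), then there is no splitting ℤ_{(k₊+k₋)n+1} = (M,S) with multiplier set M = [-k₋,k₊]* = {m ∈ ℤ : -k₋ ≤ m ≤ k₊, m ≠ 0} and |S| = n. (Equivalently, the (k₊,k₋,n)-quasi-cross does not lattice tile ℝⁿ.) -/

import Mathlib

/-- `(M, S)` is a splitting of `ℤ_q`: `M ⊆ ℤ \ {0}`, and the products `m·s`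
(for `m ∈ M`, `s ∈ S`) are pairwise distinct and cover exactly the nonzero
elements of `ZMod q`. -/
def IsSplitting (q : ℕ) (M : Finset ℤ) (S : Finset (ZMod q)) : Prop :=
  (0 : ℤ) ∉ M ∧
  Set.InjOn (fun p : ℤ × ZMod q => (p.1 : ZMod q) * p.2) ↑(M ×ˢ S) ∧
  (fun p : ℤ × ZMod q => (p.1 : ZMod q) * p.2) '' ↑(M ×ˢ S) = {a : ZMod q | a ≠ 0}

/-- Counting: a splitting of `ℤ_q` forces `q - 1 = |M|·|S|`. -/
lemma splitting_card (q : ℕ) (hq : 0 < q) (M : Finset ℤ) (S : Finset (ZMod q))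
    (h : IsSplitting q M S) : q - 1 = M.card * S.card := by
  classical
  haveI : NeZero q := ⟨hq.ne'⟩
  obtain ⟨-, hinj, himg⟩ := h
  have h1 : ((M ×ˢ S).image (fun p : ℤ × ZMod q => (p.1 : ZMod q) * p.2)).card
      = M.card * S.card := by
    rw [Finset.card_image_of_injOn hinj, Finset.card_product]
  have h2 : (M ×ˢ S).image (fun p : ℤ × ZMod q => (p.1 : ZMod q) * p.2)
      = Finset.univ.erase (0 : ZMod q) := by
    apply Finset.coe_injective
    rw [Finset.coe_image, himg, Finset.coe_erase]
    ext a
    simp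
  rw [h2, Finset.card_erase_of_mem (Finset.mem_univ _), Finset.card_univ, ZMod.card] at h1
  omega

/-- Stripping a prime `p` not dividing any element of `M` from the modulus. -/
lemma strip_lemma (M : Finset ℤ) (p d q : ℕ) (hp : p.Prime) (hd : 0 < d)
    (hq : q = p * d)
    (hM : ∀ m ∈ M, ¬ (p : ℤ) ∣ m)
    (S : Finset (ZMod q)) (h : IsSplitting q M S) :
    ∃ S' : Finset (ZMod d), IsSplitting d M S' := by
  classical
  subst hq
  obtain ⟨h0, hinj, himg⟩ := h
  haveI : NeZero d := ⟨hd.ne'⟩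
  haveI : Fact p.Prime := ⟨hp⟩
  haveI : NeZero (p * d) := ⟨Nat.mul_ne_zero hp.pos.ne' hd.ne'⟩
  set e : ZMod d → ZMod (p * d) := fun x => ((p * x.val : ℕ) : ZMod (p * d)) with he
  have he_inj : Function.Injective e := by
    intro x y hxy
    have h1 : p * x.val ≡ p * y.val [MOD p * d] :=
      (ZMod.natCast_eq_natCast_iff _ _ _).mp hxy
    have h2 : x.val ≡ y.val [MOD d] := Nat.ModEq.mul_left_cancel' hp.pos.ne' h1
    have h3 : x.val = y.val := by
      have hx := ZMod.val_lt x; have hy := ZMod.val_lt y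
      unfold Nat.ModEq at h2
      rwa [Nat.mod_eq_of_lt hx, Nat.mod_eq_of_lt hy] at h2
    exact ZMod.val_injective _ h3
  have he0 : e 0 = 0 := by simp [he]
  have hval : ∀ x : ZMod d, ((x.val : ℕ) : ZMod d) = x := fun x => by
    simp [ZMod.natCast_val, ZMod.cast_id]
  have hvalq : ∀ s : ZMod (p * d), ((s.val : ℕ) : ZMod (p * d)) = s := fun s => by
    simp [ZMod.natCast_val, ZMod.cast_id]
  have hcompat : ∀ (m : ℤ) (x : ZMod d),
      e ((m : ZMod d) * x) = (m : ZMod (p * d)) * e x := by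
    intro m x
    have h1 : ((((m : ZMod d) * x).val : ℤ)) ≡ m * (x.val : ℤ) [ZMOD (d : ℤ)] := by
      rw [← ZMod.intCast_eq_intCast_iff]
      push_cast
      rw [hval, hval]
    have h2 : (p : ℤ) * (((m : ZMod d) * x).val : ℤ) ≡ (p : ℤ) * (m * (x.val : ℤ))
        [ZMOD ((p * d : ℕ) : ℤ)] := by
      push_cast
      exact h1.mul_left'
    have h3 := (ZMod.intCast_eq_intCast_iff _ _ _).mpr h2
    show ((p * ((m : ZMod d) * x).val : ℕ) : ZMod (p * d))
        = (m : ZMod (p * d)) * ((p * x.val : ℕ) : ZMod (p * d))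
    push_cast at h3 ⊢
    linear_combination h3
  refine ⟨Finset.univ.filter (fun x : ZMod d => e x ∈ S), h0, ?_, ?_⟩
  · rintro ⟨m1, x1⟩ hm1 ⟨m2, x2⟩ hm2 heq
    have hm1' : m1 ∈ M ∧ e x1 ∈ S := by
      simpa using hm1
    have hm2' : m2 ∈ M ∧ e x2 ∈ S := by
      simpa using hm2
    have heq' : (m1 : ZMod (p * d)) * e x1 = (m2 : ZMod (p * d)) * e x2 := by
      rw [← hcompat, ← hcompat]
      exact congrArg e heq
    have hmem1 : ((m1, e x1) : ℤ × ZMod (p * d)) ∈ (↑(M ×ˢ S) : Set (ℤ × ZMod (p * d))) := by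
      simp [hm1'.1, hm1'.2]
    have hmem2 : ((m2, e x2) : ℤ × ZMod (p * d)) ∈ (↑(M ×ˢ S) : Set (ℤ × ZMod (p * d))) := by
      simp [hm2'.1, hm2'.2]
    have := hinj hmem1 hmem2 heq'
    have hm12 : m1 = m2 := congrArg Prod.fst this
    have hx12 : e x1 = e x2 := congrArg Prod.snd this
    exact Prod.ext hm12 (he_inj hx12)
  · ext a
    simp only [Set.mem_image, Set.mem_setOf_eq, Finset.mem_coe, Finset.mem_product,
      Finset.mem_filter, Finset.mem_univ, true_and]
    constructor
    · rintro ⟨⟨m, x⟩, ⟨hmM, hxS⟩, rfl⟩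
      intro ha
      have hne : (m : ZMod (p * d)) * (e x) ≠ 0 := by
        have hmem2 : ((m, e x) : ℤ × ZMod (p * d)) ∈ (↑(M ×ˢ S) : Set (ℤ × ZMod (p * d))) := by
          simp [hmM, hxS]
        have : (m : ZMod (p * d)) * e x
            ∈ (fun z : ℤ × ZMod (p * d) => (z.1 : ZMod (p * d)) * z.2) '' ↑(M ×ˢ S) :=
          ⟨(m, e x), hmem2, rfl⟩
        rw [himg] at this
        exact this
      apply hne
      rw [← hcompat]
      simp only at ha
      rw [ha, he0]
    · intro ha
      have hey : e a ≠ 0 := fun h => ha (he_inj (h.trans he0.symm))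
      have hmem : e a ∈ (fun z : ℤ × ZMod (p * d) =>
          (z.1 : ZMod (p * d)) * z.2) '' ↑(M ×ˢ S) := by
        rw [himg]; exact hey
      obtain ⟨⟨m, s⟩, hmem, heq⟩ := hmem
      have hmem' : m ∈ M ∧ s ∈ S := by simpa using hmem
      simp only at heq
      have hdvdq : p ∣ p * d := dvd_mul_right p d
      have hs0 : ((s.val : ℕ) : ZMod p) = 0 := by
        have hcast : (ZMod.castHom hdvdq (ZMod p)) ((m : ZMod (p * d)) * s) = 0 := by
          rw [heq]
          show (ZMod.castHom hdvdq (ZMod p)) ((p * a.val : ℕ) : ZMod (p * d)) = 0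
          rw [map_natCast]
          push_cast
          simp
        rw [map_mul, map_intCast] at hcast
        have hm0 : (m : ZMod p) ≠ 0 := by
          rw [Ne, ZMod.intCast_zmod_eq_zero_iff_dvd]
          exact hM m hmem'.1
        have hsc : (ZMod.castHom hdvdq (ZMod p)) s = 0 := by
          rcases mul_eq_zero.mp hcast with h | h
          · exact absurd h hm0
          · exact h
        calc ((s.val : ℕ) : ZMod p)
            = (ZMod.castHom hdvdq (ZMod p)) ((s.val : ℕ) : ZMod (p * d)) := by
              rw [map_natCast]
          _ = (ZMod.castHom hdvdq (ZMod p)) s := by rw [hvalq]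
          _ = 0 := hsc
      have hps : p ∣ s.val := (ZMod.natCast_eq_zero_iff _ _).mp hs0
      obtain ⟨k, hk⟩ := hps
      have hkd : k < d := by
        have hlt := ZMod.val_lt s
        rw [hk] at hlt
        exact lt_of_mul_lt_mul_left hlt (Nat.zero_le p)
      have hek : e ((k : ZMod d)) = s := by
        show ((p * ((k : ZMod d)).val : ℕ) : ZMod (p * d)) = s
        rw [ZMod.val_natCast_of_lt hkd, ← hk, hvalq]
      refine ⟨(m, (k : ZMod d)), ⟨hmem'.1, by rw [hek]; exact hmem'.2⟩, ?_⟩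
      show (m : ZMod d) * (k : ZMod d) = a
      apply he_inj
      rw [hcompat, hek, heq]

/-- Descend a splitting along a cofactor all of whose prime factors exceed `kp`. -/
lemma descend (kp : ℕ) (M : Finset ℤ)
    (hM : ∀ p : ℕ, p.Prime → kp < p → ∀ m ∈ M, ¬ (p : ℤ) ∣ m) :
    ∀ N q d : ℕ, 0 < d → 0 < N → q = d * N →
      (∀ p : ℕ, p.Prime → p ∣ N → kp < p) →
      (∃ S, IsSplitting q M S) → ∃ S', IsSplitting d M S' := by
  intro N
  induction N using Nat.strong_induction_on with
  | _ N ih =>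
    intro q d hd hN hq hNbig hS
    rcases eq_or_ne N 1 with rfl | hN1
    · rw [Nat.mul_one] at hq
      subst hq
      exact hS
    · obtain ⟨p, hp, hpd⟩ := Nat.exists_prime_and_dvd hN1
      obtain ⟨N', rfl⟩ := hpd
      rcases Nat.eq_zero_or_pos N' with rfl | hN'
      · simp at hN
      have hpk : kp < p := hNbig p hp (dvd_mul_right _ _)
      obtain ⟨S, hSp⟩ := hS
      obtain ⟨S1, hS1⟩ := strip_lemma M p (d * N') q hp (Nat.mul_pos hd hN')
        (by rw [hq]; ring) (hM p hp hpk) S hSp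
      exact ih N' (by nlinarith [hp.two_le]) (d * N') d hd hN' rfl
        (fun p' hp' hpd' => hNbig p' hp' (hpd'.mul_left p)) ⟨S1, hS1⟩

/-- Extract the `kp`-smooth part of the modulus, keeping a splitting. -/
lemma smooth_decomp (kp : ℕ) (M : Finset ℤ)
    (hM : ∀ p : ℕ, p.Prime → kp < p → ∀ m ∈ M, ¬ (p : ℤ) ∣ m) :
    ∀ q : ℕ, 0 < q → (∃ S, IsSplitting q M S) →
      ∃ d N, (∃ S', IsSplitting d M S') ∧ q = d * N ∧
        (∀ p, p.Prime → p ∣ d → p ≤ kp) ∧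
        (∀ p, p.Prime → p ∣ N → kp < p) := by
  intro q
  induction q using Nat.strong_induction_on with
  | _ q ih =>
    intro hq0 hS
    by_cases hbig : ∃ p : ℕ, p.Prime ∧ kp < p ∧ p ∣ q
    · obtain ⟨p, hp, hkp, hpq⟩ := hbig
      obtain ⟨q', rfl⟩ := hpq
      rcases Nat.eq_zero_or_pos q' with rfl | hq'
      · simp at hq0
      obtain ⟨S, hSp⟩ := hS
      obtain ⟨S1, hS1⟩ := strip_lemma M p q' (p * q') hp hq' rfl (hM p hp hkp) S hSp
      obtain ⟨d, N, hsp, hdN, h1, h2⟩ := ih q' (by nlinarith [hp.two_le]) hq' ⟨S1, hS1⟩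
      refine ⟨d, p * N, hsp, by rw [hdN]; ring, h1, ?_⟩
      intro p' hp' hpd'
      rcases (Nat.Prime.dvd_mul hp').mp hpd' with h | h
      · rwa [(Nat.prime_dvd_prime_iff_eq hp' hp).mp h]
      · exact h2 p' hp' h
    · push_neg at hbig
      refine ⟨q, 1, hS, (Nat.mul_one q).symm, ?_, ?_⟩
      · intro p hp hpq
        by_contra hle
        exact hbig p hp (by omega) hpq
      · intro p hp hpq
        exact absurd (Nat.le_of_dvd one_pos hpq) (by have := hp.two_le; omega)

lemma no_splitting (kp km : ℕ) (hkm : 1 ≤ km) (hk : km < kp)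
    (r u : ℤ) (hr1 : 1 < r) (hr2 : r < (kp : ℤ) + km)
    (hu : Int.gcd u (primorial kp) = 1)
    (q : ℕ) (hq0 : 0 < q)
    (hcong : (q : ℤ) ≡ r * u [ZMOD r * (primorial kp : ℤ)])
    (S : Finset (ZMod q))
    (hsplit : IsSplitting q ((Finset.Icc (-(km : ℤ)) (kp : ℤ)).erase 0) S) : False := by
  classical
  have hK2 : 2 ≤ kp + km := by omega
  -- card of M
  have hMcard : ((Finset.Icc (-(km : ℤ)) (kp : ℤ)).erase 0).card = kp + km := by
    rw [Finset.card_erase_of_mem (by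
      simp only [Finset.mem_Icc]
      exact ⟨neg_nonpos.mpr (by positivity), by positivity⟩)]
    rw [Int.card_Icc]
    have h : ((kp : ℤ) + 1 - -(km : ℤ)) = ((kp + km + 1 : ℕ) : ℤ) := by push_cast; ring
    rw [h, Int.toNat_natCast]
    omega
  -- big primes divide no element of M
  have hMbig : ∀ p : ℕ, p.Prime → kp < p →
      ∀ m ∈ (Finset.Icc (-(km : ℤ)) (kp : ℤ)).erase 0, ¬ (p : ℤ) ∣ m := by
    intro p hp hpk m hm hdvd
    rw [Finset.mem_erase, Finset.mem_Icc] at hm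
    have h1 : (p : ℤ) ≤ |m| := Int.le_of_dvd (abs_pos.mpr hm.1) ((dvd_abs _ _).mpr hdvd)
    have h2 : |m| ≤ kp := abs_le.mpr ⟨by
      have h3 : -(kp : ℤ) ≤ -(km : ℤ) := neg_le_neg (by exact_mod_cast hk.le)
      linarith [hm.2.1], hm.2.2⟩
    have h4 : (p : ℤ) ≤ kp := le_trans h1 h2
    exact absurd (by exact_mod_cast h4) (not_le.mpr hpk)
  -- decomposition q = R * W with W coprime to all small primes
  obtain ⟨t, ht⟩ := Int.ModEq.dvd hcong
  have hqrw : (q : ℤ) = r * (u - (primorial kp : ℤ) * t) := by linarith [ht]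
  have hqz : (0 : ℤ) < (q : ℤ) := by exact_mod_cast hq0
  have hw0 : 0 < u - (primorial kp : ℤ) * t := by nlinarith
  obtain ⟨R, hRr⟩ : ∃ R : ℕ, (R : ℤ) = r := ⟨r.toNat, Int.toNat_of_nonneg (by linarith)⟩
  obtain ⟨W, hWw⟩ : ∃ W : ℕ, (W : ℤ) = u - (primorial kp : ℤ) * t :=
    ⟨_, Int.toNat_of_nonneg hw0.le⟩
  have hqRW : q = R * W := by
    have h : (q : ℤ) = ((R * W : ℕ) : ℤ) := by push_cast; rw [hRr, hWw]; exact hqrw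
    exact_mod_cast h
  have hR1 : 1 < R := by
    have h : (1 : ℤ) < (R : ℤ) := by rw [hRr]; exact hr1
    exact_mod_cast h
  have hRK : R < kp + km := by
    have h : (R : ℤ) < ((kp + km : ℕ) : ℤ) := by rw [hRr]; push_cast; linarith
    exact_mod_cast h
  -- no small prime divides W
  have hWsmall : ∀ p : ℕ, p.Prime → p ≤ kp → ¬ p ∣ W := by
    intro p hp hple hdvdW
    have hpP : p ∣ primorial kp := by
      unfold primorial
      exact Finset.dvd_prod_of_mem _ (by
        simp only [Finset.mem_filter, Finset.mem_range]
        exact ⟨by omega, hp⟩)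
    have hpw : (p : ℤ) ∣ u - (primorial kp : ℤ) * t := by
      rw [← hWw]
      exact_mod_cast Int.natCast_dvd_natCast.mpr hdvdW
    have hpu : (p : ℤ) ∣ u := by
      have h : u = (u - (primorial kp : ℤ) * t) + (primorial kp : ℤ) * t := by ring
      rw [h]
      exact dvd_add hpw ((Int.natCast_dvd_natCast.mpr hpP).mul_right t)
    have hg : (p : ℤ) ∣ (Int.gcd u (primorial kp : ℤ) : ℤ) :=
      Int.dvd_coe_gcd hpu (Int.natCast_dvd_natCast.mpr hpP)
    rw [hu] at hg
    have h5 : (p : ℤ) ≤ 1 := Int.le_of_dvd one_pos hg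
    have := hp.two_le
    omega
  -- smooth part
  obtain ⟨d, N, ⟨S1, hS1⟩, hqdN, hdsmall, hNbig⟩ :=
    smooth_decomp kp _ hMbig q hq0 ⟨S, hsplit⟩
  have hd0 : 0 < d := by
    rcases Nat.eq_zero_or_pos d with rfl | h
    · rw [hqdN] at hq0; simp at hq0
    · exact h
  have hdR : d ∣ R := by
    have hdq : d ∣ q := ⟨N, hqdN⟩
    have hcop : Nat.Coprime d W := by
      by_contra hnc
      obtain ⟨p, hp, hpd, hpW⟩ := Nat.Prime.not_coprime_iff_dvd.mp hnc
      exact hWsmall p hp (hdsmall p hp hpd) hpW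
    exact hcop.dvd_of_dvd_mul_right (hqRW ▸ hdq)
  have hd1 : d = 1 := by
    have hcount := splitting_card d hd0 _ S1 hS1
    rw [hMcard] at hcount
    have hdle : d ≤ R := Nat.le_of_dvd (by omega) hdR
    rcases Nat.eq_zero_or_pos S1.card with h | h
    · rw [h, Nat.mul_zero] at hcount; omega
    · have hK' : kp + km ≤ (kp + km) * S1.card := Nat.le_mul_of_pos_right _ h
      omega
  have hqbig : ∀ p, p.Prime → p ∣ q → kp < p := by
    intro p hp hpq
    apply hNbig p hp
    rwa [hqdN, hd1, one_mul] at hpq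
  -- a prime factor of R gives the contradiction
  obtain ⟨p₀, hp₀, hp₀R⟩ := Nat.exists_prime_and_dvd (show R ≠ 1 by omega)
  have hp₀q : p₀ ∣ q := hp₀R.trans ⟨W, hqRW⟩
  have hp₀K : p₀ < kp + km := lt_of_le_of_lt (Nat.le_of_dvd (by omega) hp₀R) hRK
  have hq0' : 0 < q / p₀ := Nat.div_pos (Nat.le_of_dvd hq0 hp₀q) hp₀.pos
  obtain ⟨S2, hS2⟩ := descend kp _ hMbig (q / p₀) q p₀ hp₀.pos hq0'
    (Nat.mul_div_cancel' hp₀q).symm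
    (fun p hp hpd => hqbig p hp (hpd.trans (Nat.div_dvd_of_dvd hp₀q)))
    ⟨S, hsplit⟩
  have hcount := splitting_card p₀ hp₀.pos _ S2 hS2
  rw [hMcard] at hcount
  have h2 := hp₀.two_le
  rcases Nat.eq_zero_or_pos S2.card with h | h
  · rw [h, Nat.mul_zero] at hcount; omega
  · have hK' : kp + km ≤ (kp + km) * S2.card := Nat.le_mul_of_pos_right _ h
    omega

theorem stmt_11 (kp km n : ℕ) (hkm : 1 ≤ km) (hk : km < kp) (hn : 1 ≤ n)
    (r : ℤ) (hr1 : 1 < r) (hr2 : r < (kp : ℤ) + km)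
    (u : ℤ) (hu : Int.gcd u (primorial kp) = 1)
    (hcong : (((kp + km) * n + 1 : ℕ) : ℤ) ≡ r * u [ZMOD r * (primorial kp : ℤ)]) :
    ¬ ∃ S : Finset (ZMod ((kp + km) * n + 1)),
        IsSplitting ((kp + km) * n + 1)
          ((Finset.Icc (-(km : ℤ)) (kp : ℤ)).erase 0) S ∧ S.card = n := by
  rintro ⟨S, hsplit, -⟩
  exact no_splitting kp km hkm hk r u hr1 hr2 hu _ (Nat.succ_pos _) hcong S hsplit
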